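/- arXiv:2409.06834 — 2 statements merged into one kernel-verified Lean document; each statement's English description precedes it below -/
import Mathlib

section
/- Let (Ω, F, P) be a probability space, let m, ρ ∈ ℕ with 1 ≤ ρ ≤ m + 1, and let V : Ω → ℝ be a measurable random variable with 0 ≤ V ≤ 1 almost surely. Suppose that for every ε ∈ (0,1), P[V > ε] ≤ min{1, Σ_{j=0}^{ρ−1} C(m,j)·ε^j·(1−ε)^{m−j}}. Then E[V] ≤ ρ/(m+1). -/
open MeasureTheory

open Set


lemma prod_shift (j : ℕ) : ∀ s : ℕ, j.factorial * ∏ k ∈ Finset.range s, (j + 1 + k) = (j + s).factorial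
  | 0 => by simp
  | s + 1 => by
    rw [Finset.prod_range_succ, ← mul_assoc, prod_shift j s, ← add_assoc, Nat.factorial_succ,
      add_right_comm, mul_comm]

lemma beta_nat (j n : ℕ) :
    ∫ x in (0:ℝ)..1, x ^ j * (1 - x) ^ n
      = (j.factorial * n.factorial : ℝ) / (j + n + 1).factorial := by
  have h := Complex.betaIntegral_eval_nat_add_one_right (u := (j : ℂ) + 1) (by simp; positivity) n
  have h1 : Complex.betaIntegral ((j : ℂ) + 1) ((n : ℂ) + 1)
      = ((∫ x in (0:ℝ)..1, x ^ j * (1 - x) ^ n : ℝ) : ℂ) := by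
    rw [Complex.betaIntegral, ← intervalIntegral.integral_ofReal]
    refine intervalIntegral.integral_congr fun x hx => ?_
    push_cast
    rw [add_sub_cancel_right, add_sub_cancel_right, Complex.cpow_natCast, Complex.cpow_natCast]
  have h2 : ∏ k ∈ Finset.range (n + 1), ((j : ℂ) + 1 + k)
      = (((j + n + 1).factorial / j.factorial : ℝ) : ℂ) := by
    have h3 : ((j.factorial * ∏ k ∈ Finset.range (n+1), (j + 1 + k) : ℕ) : ℂ)
        = ((j + (n+1)).factorial : ℕ) := by exact_mod_cast congrArg (Nat.cast : ℕ → ℂ) (prod_shift j (n+1))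
    have hfj : (j.factorial : ℂ) ≠ 0 := by exact_mod_cast j.factorial_ne_zero
    push_cast at h3 ⊢
    field_simp
    rw [mul_comm]
    convert h3 using 2
    rw [add_assoc]
  rw [h1, h2] at h
  have h4 : (∫ x in (0:ℝ)..1, x ^ j * (1 - x) ^ n)
      = (n.factorial : ℝ) / ((j + n + 1).factorial / j.factorial) := by exact_mod_cast h
  rw [h4]
  have hfj : (j.factorial : ℝ) ≠ 0 := by positivity
  have hfJ : ((j + n + 1).factorial : ℝ) ≠ 0 := by positivity
  field_simp

theorem stmt_4 {Ω : Type*} [MeasurableSpace Ω] (μ : Measure Ω) [IsProbabilityMeasure μ]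
    (m ρ : ℕ) (hρ1 : 1 ≤ ρ) (hρm : ρ ≤ m + 1)
    (V : Ω → ℝ) (hV : Measurable V)
    (hV0 : ∀ᵐ ω ∂μ, 0 ≤ V ω) (hV1 : ∀ᵐ ω ∂μ, V ω ≤ 1)
    (htail : ∀ ε : ℝ, 0 < ε → ε < 1 →
      μ {ω | ε < V ω} ≤ ENNReal.ofReal
        (min 1 (∑ j ∈ Finset.range ρ, (m.choose j : ℝ) * ε ^ j * (1 - ε) ^ (m - j)))) :
    ∫ ω, V ω ∂μ ≤ (ρ : ℝ) / (m + 1) := by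
  set B : ℝ → ℝ := fun ε => ∑ j ∈ Finset.range ρ, (m.choose j : ℝ) * ε ^ j * (1 - ε) ^ (m - j)
    with hB
  set g : ℝ → ℝ := fun t => (μ {a | t < V a}).toReal with hg
  -- integrability of V
  have hVint : Integrable V μ := by
    refine (integrable_const (1:ℝ)).mono' hV.aestronglyMeasurable ?_
    filter_upwards [hV0, hV1] with ω h0 h1
    rw [Real.norm_eq_abs, abs_le]; constructor <;> linarith
  rw [hVint.integral_eq_integral_meas_lt hV0]
  -- restrict to Ioo 0 1
  have hstep : ∫ t in Ioi (0:ℝ), g t = ∫ t in Ioo (0:ℝ) 1, g t := by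
    refine setIntegral_eq_of_subset_of_ae_diff_eq_zero nullMeasurableSet_Ioi
      Ioo_subset_Ioi_self (Filter.Eventually.of_forall fun t ht => ?_)
    have h1t : (1:ℝ) ≤ t := by
      rcases ht with ⟨ht0, ht1⟩
      simp only [mem_Ioo, mem_Ioi, not_and, not_lt] at ht1 ht0
      exact ht1 ht0
    have : μ {a | t < V a} = 0 := by
      rw [measure_eq_zero_iff_ae_notMem]
      filter_upwards [hV1] with a ha
      simp only [mem_setOf_eq, not_lt]
      linarith
    simp [hg, this]
  change ∫ t in Ioi (0:ℝ), g t ≤ _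
  rw [hstep]
  -- measurability and integrability of g
  have hgmeas : Measurable g := by
    have hanti : Antitone (fun t : ℝ => μ {a | t < V a}) :=
      fun s t hst => measure_mono fun a ha => lt_of_le_of_lt hst ha
    exact hanti.measurable.ennreal_toReal
  have hgint : IntegrableOn g (Ioo (0:ℝ) 1) := by
    refine Measure.integrableOn_of_bounded (M := 1)
      (by rw [Real.volume_Ioo]; exact ENNReal.ofReal_ne_top) hgmeas.aestronglyMeasurable
      (Filter.Eventually.of_forall fun t => ?_)
    rw [Real.norm_eq_abs, abs_of_nonneg ENNReal.toReal_nonneg]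
    exact ENNReal.toReal_le_of_le_ofReal zero_le_one
      (by rw [ENNReal.ofReal_one]; exact prob_le_one)
  -- integrability of each term of B
  have hterm : ∀ j, IntegrableOn (fun ε : ℝ => (m.choose j : ℝ) * ε ^ j * (1 - ε) ^ (m - j))
      (Ioo (0:ℝ) 1) := by
    intro j
    have hcont : Continuous (fun ε : ℝ => (m.choose j : ℝ) * ε ^ j * (1 - ε) ^ (m - j)) :=
      (continuous_const.mul (continuous_pow j)).mul
        ((continuous_const.sub continuous_id).pow (m - j))
    exact ((hcont.intervalIntegrable 0 1).1).mono_set Ioo_subset_Ioc_self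
  have hBint : IntegrableOn B (Ioo (0:ℝ) 1) := by
    rw [hB]; exact integrable_finset_sum _ fun j _ => hterm j
  -- pointwise bound
  have hle : ∫ t in Ioo (0:ℝ) 1, g t ≤ ∫ t in Ioo (0:ℝ) 1, B t := by
    refine setIntegral_mono_on hgint hBint measurableSet_Ioo fun t ht => ?_
    have hB0 : 0 ≤ B t := by
      apply Finset.sum_nonneg
      intro j _
      have h1t : (0:ℝ) ≤ 1 - t := by linarith [ht.2]
      exact mul_nonneg (mul_nonneg (by positivity) (pow_nonneg ht.1.le j))
        (pow_nonneg h1t _)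
    have := htail t ht.1 ht.2
    calc g t ≤ min 1 (B t) :=
          ENNReal.toReal_le_of_le_ofReal (le_min zero_le_one hB0) this
      _ ≤ B t := min_le_right _ _
  refine hle.trans ?_
  -- compute the integral of B
  have hcalc : ∫ t in Ioo (0:ℝ) 1, B t = (ρ : ℝ) / (m + 1) := by
    rw [hB, integral_finset_sum _ fun j _ => hterm j]
    have hterm_val : ∀ j ∈ Finset.range ρ,
        ∫ t in Ioo (0:ℝ) 1, (m.choose j : ℝ) * t ^ j * (1 - t) ^ (m - j) = 1 / (m + 1) := by
      intro j hj
      have hjm : j ≤ m := by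
        have := Finset.mem_range.mp hj
        omega
      have : ∫ t in Ioo (0:ℝ) 1, (m.choose j : ℝ) * t ^ j * (1 - t) ^ (m - j)
          = (m.choose j : ℝ) * ∫ t in Ioo (0:ℝ) 1, t ^ j * (1 - t) ^ (m - j) := by
        simp_rw [mul_assoc]
        exact integral_const_mul _ _
      rw [this, ← integral_Ioc_eq_integral_Ioo,
        ← intervalIntegral.integral_of_le (zero_le_one), beta_nat]
      have hsum : j + (m - j) + 1 = m + 1 := by omega
      rw [hsum]
      have key : (m.choose j : ℝ) * (j.factorial * (m - j).factorial) = m.factorial := by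
        have := Nat.choose_mul_factorial_mul_factorial hjm
        push_cast [← this]
        ring
      have h5 : ((m + 1).factorial : ℝ) = ((m : ℝ) + 1) * m.factorial := by
        rw [Nat.factorial_succ]; push_cast; ring
      have hfm : (0:ℝ) < m.factorial := by exact_mod_cast m.factorial_pos
      rw [h5, ← mul_div_assoc, key, div_eq_div_iff (by positivity) (by positivity)]
      ring
    rw [Finset.sum_congr rfl hterm_val]
    simp [Finset.sum_const]
    ring
  rw [hcalc]
end

section
/- Let μ be the standard Gaussian measure on ℝ (mean 0, variance 1), let σ ∈ (0,1), and let x, u ∈ ℝ satisfy 10 − x² ≥ 0 and 10 − (x + 2 + u)² − σ² ≥ (1 − σ²)·(10 − x²). Then μ{ t ∈ ℝ : 10 − (x + 2 + u + σ·t)² < 0 } ≤ 1 − ((10 − x²)/10)·(1 − σ²). -/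
open MeasureTheory ProbabilityTheory Real Filter

lemma integrable_exp_half : Integrable (fun t : ℝ => rexp (-(2:ℝ)⁻¹ * t ^ 2)) := by
  exact integrable_exp_neg_mul_sq (by norm_num)

lemma integrable_id_exp_half : Integrable (fun t : ℝ => t * rexp (-(2:ℝ)⁻¹ * t ^ 2)) := by
  exact integrable_mul_exp_neg_mul_sq (by norm_num)

lemma integrable_sq_exp_half : Integrable (fun t : ℝ => t ^ 2 * rexp (-(2:ℝ)⁻¹ * t ^ 2)) := by
  have h := integrable_rpow_mul_exp_neg_mul_sq (b := (2:ℝ)⁻¹) (by norm_num) (s := 2) (by norm_num)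
  convert h using 2 with t
  rw [← Real.rpow_natCast t 2]
  norm_num

lemma integral_id_exp_half : ∫ t : ℝ, t * rexp (-(2:ℝ)⁻¹ * t ^ 2) = 0 := by
  have hderiv : ∀ t : ℝ, HasDerivAt (fun s : ℝ => -rexp (-(2:ℝ)⁻¹ * s ^ 2))
      (t * rexp (-(2:ℝ)⁻¹ * t ^ 2)) t := by
    intro t
    have h1 : HasDerivAt (fun s : ℝ => -(2:ℝ)⁻¹ * s ^ 2) (-(2:ℝ)⁻¹ * (2 * t)) t := by
      simpa using ((hasDerivAt_pow 2 t).const_mul (-(2:ℝ)⁻¹))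
    have h2 := (h1.exp).neg
    refine HasDerivAt.congr_deriv h2 ?_
    ring
  have := integral_eq_zero_of_hasDerivAt_of_integrable hderiv integrable_id_exp_half
    integrable_exp_half.neg
  exact this

lemma integral_sq_exp_half : ∫ t : ℝ, t ^ 2 * rexp (-(2:ℝ)⁻¹ * t ^ 2) = Real.sqrt (2 * π) := by
  have hderiv : ∀ t : ℝ, HasDerivAt (fun s : ℝ => -(s * rexp (-(2:ℝ)⁻¹ * s ^ 2)))
      (t ^ 2 * rexp (-(2:ℝ)⁻¹ * t ^ 2) - rexp (-(2:ℝ)⁻¹ * t ^ 2)) t := by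
    intro t
    have h1 : HasDerivAt (fun s : ℝ => -(2:ℝ)⁻¹ * s ^ 2) (-(2:ℝ)⁻¹ * (2 * t)) t := by
      simpa using ((hasDerivAt_pow 2 t).const_mul (-(2:ℝ)⁻¹))
    have h2 := ((hasDerivAt_id t).mul h1.exp).neg
    refine HasDerivAt.congr_deriv h2 ?_
    simp [Real.exp_ne_zero]
    ring
  have hInt : Integrable (fun t : ℝ => t ^ 2 * rexp (-(2:ℝ)⁻¹ * t ^ 2)
      - rexp (-(2:ℝ)⁻¹ * t ^ 2)) := integrable_sq_exp_half.sub integrable_exp_half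
  have hF : Integrable (fun t : ℝ => -(t * rexp (-(2:ℝ)⁻¹ * t ^ 2))) :=
    integrable_id_exp_half.neg
  have h0 := integral_eq_zero_of_hasDerivAt_of_integrable hderiv hInt hF
  have hsplit : ∫ t : ℝ, (t ^ 2 * rexp (-(2:ℝ)⁻¹ * t ^ 2) - rexp (-(2:ℝ)⁻¹ * t ^ 2))
      = (∫ t : ℝ, t ^ 2 * rexp (-(2:ℝ)⁻¹ * t ^ 2)) - ∫ t : ℝ, rexp (-(2:ℝ)⁻¹ * t ^ 2) :=
    integral_sub integrable_sq_exp_half integrable_exp_half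
  have hg : ∫ t : ℝ, rexp (-(2:ℝ)⁻¹ * t ^ 2) = Real.sqrt (2 * π) := by
    have := integral_gaussian (2:ℝ)⁻¹
    rw [this]
    congr 1
    field_simp
  rw [hsplit] at h0
  linarith [h0, hg]

lemma pdf_eq (t : ℝ) :
    gaussianPDFReal 0 1 t = (Real.sqrt (2 * π))⁻¹ * rexp (-(2:ℝ)⁻¹ * t ^ 2) := by
  simp only [gaussianPDFReal, NNReal.coe_one, mul_one, sub_zero]
  congr 1
  ring

lemma hfun_eq (y σ : ℝ) : (fun t : ℝ => (y + σ * t) ^ 2 * gaussianPDFReal 0 1 t)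
    = fun t : ℝ => (Real.sqrt (2 * π))⁻¹ *
        (y ^ 2 * rexp (-(2:ℝ)⁻¹ * t ^ 2) + (2 * y * σ) * (t * rexp (-(2:ℝ)⁻¹ * t ^ 2))
          + σ ^ 2 * (t ^ 2 * rexp (-(2:ℝ)⁻¹ * t ^ 2))) := by
  funext t
  rw [pdf_eq t]
  ring

lemma integral_shift_sq_gaussian (y σ : ℝ) :
    ∫ t : ℝ, (y + σ * t) ^ 2 * gaussianPDFReal 0 1 t = y ^ 2 + σ ^ 2 := by
  have hA : Integrable (fun t : ℝ => y ^ 2 * rexp (-(2:ℝ)⁻¹ * t ^ 2)) :=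
    integrable_exp_half.const_mul _
  have hB : Integrable (fun t : ℝ => (2 * y * σ) * (t * rexp (-(2:ℝ)⁻¹ * t ^ 2))) :=
    integrable_id_exp_half.const_mul _
  have hC : Integrable (fun t : ℝ => σ ^ 2 * (t ^ 2 * rexp (-(2:ℝ)⁻¹ * t ^ 2))) :=
    integrable_sq_exp_half.const_mul _
  have h3 : ∫ t : ℝ, (y ^ 2 * rexp (-(2:ℝ)⁻¹ * t ^ 2)
        + (2 * y * σ) * (t * rexp (-(2:ℝ)⁻¹ * t ^ 2))
        + σ ^ 2 * (t ^ 2 * rexp (-(2:ℝ)⁻¹ * t ^ 2)))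
      = ((∫ t : ℝ, y ^ 2 * rexp (-(2:ℝ)⁻¹ * t ^ 2))
        + ∫ t : ℝ, (2 * y * σ) * (t * rexp (-(2:ℝ)⁻¹ * t ^ 2)))
        + ∫ t : ℝ, σ ^ 2 * (t ^ 2 * rexp (-(2:ℝ)⁻¹ * t ^ 2)) := by
    exact (integral_add (hA.add hB) hC).trans
      (by simp only [Pi.add_apply]; rw [integral_add hA hB])
  have h1 : ∫ t : ℝ, rexp (-(2:ℝ)⁻¹ * t ^ 2) = Real.sqrt (2 * π) := by
    rw [integral_gaussian]
    congr 1
    rw [eq_comm, mul_comm, eq_div_iff (by norm_num)]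
    ring
  rw [hfun_eq, integral_const_mul, h3, integral_const_mul, integral_const_mul, integral_const_mul,
    integral_id_exp_half, integral_sq_exp_half, h1]
  have h2 : Real.sqrt (2 * π) ≠ 0 := by positivity
  field_simp
  ring

lemma integrable_shift_sq (y σ : ℝ) :
    Integrable (fun t : ℝ => (y + σ * t) ^ 2 * gaussianPDFReal 0 1 t) := by
  rw [hfun_eq]
  exact (((integrable_exp_half.const_mul _).add (integrable_id_exp_half.const_mul _)).add
    (integrable_sq_exp_half.const_mul _)).const_mul _

lemma lintegral_shift_sq (y σ : ℝ) :
    ∫⁻ t : ℝ, ENNReal.ofReal ((y + σ * t) ^ 2) ∂(gaussianReal 0 1)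
      = ENNReal.ofReal (y ^ 2 + σ ^ 2) := by
  rw [gaussianReal_of_var_ne_zero 0 one_ne_zero]
  rw [lintegral_withDensity_eq_lintegral_mul _ (measurable_gaussianPDF 0 1)]
  swap
  · exact (measurable_const.add (measurable_const.mul measurable_id)).pow_const 2 |>.ennreal_ofReal
  have : (fun t : ℝ => gaussianPDF 0 1 t * ENNReal.ofReal ((y + σ * t) ^ 2))
      = fun t : ℝ => ENNReal.ofReal ((y + σ * t) ^ 2 * gaussianPDFReal 0 1 t) := by
    funext t
    rw [gaussianPDF, ← ENNReal.ofReal_mul (gaussianPDFReal_nonneg 0 1 t)]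
    ring_nf
  calc ∫⁻ t : ℝ, gaussianPDF 0 1 t * ENNReal.ofReal ((y + σ * t) ^ 2)
      = ∫⁻ t : ℝ, ENNReal.ofReal ((y + σ * t) ^ 2 * gaussianPDFReal 0 1 t) := by rw [this]
    _ = ENNReal.ofReal (∫ t : ℝ, (y + σ * t) ^ 2 * gaussianPDFReal 0 1 t) := by
        rw [← ofReal_integral_eq_lintegral_ofReal (integrable_shift_sq y σ)]
        exact Filter.Eventually.of_forall fun t =>
          mul_nonneg (sq_nonneg _) (gaussianPDFReal_nonneg 0 1 t)
    _ = ENNReal.ofReal (y ^ 2 + σ ^ 2) := by rw [integral_shift_sq_gaussian]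

theorem stmt_16 (σ : ℝ) (hσ0 : 0 < σ) (hσ1 : σ < 1) (x u : ℝ)
    (hsafe : 10 - x ^ 2 ≥ 0)
    (htight : 10 - (x + 2 + u) ^ 2 - σ ^ 2 ≥ (1 - σ ^ 2) * (10 - x ^ 2)) :
    gaussianReal 0 1 {t : ℝ | 10 - (x + 2 + u + σ * t) ^ 2 < 0}
      ≤ ENNReal.ofReal (1 - ((10 - x ^ 2) / 10) * (1 - σ ^ 2)) := by
  set y : ℝ := x + 2 + u with hy
  have hmeas : AEMeasurable (fun t : ℝ => ENNReal.ofReal ((y + σ * t) ^ 2))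
      (gaussianReal 0 1) := by
    exact ((measurable_const.add (measurable_id.const_mul σ)).pow_const 2).ennreal_ofReal.aemeasurable
  have hsub : {t : ℝ | 10 - (x + 2 + u + σ * t) ^ 2 < 0}
      ⊆ {t : ℝ | ENNReal.ofReal 10 ≤ ENNReal.ofReal ((y + σ * t) ^ 2)} := by
    intro t ht
    simp only [Set.mem_setOf_eq] at ht ⊢
    rw [hy]
    exact ENNReal.ofReal_le_ofReal (by nlinarith)
  calc gaussianReal 0 1 {t : ℝ | 10 - (x + 2 + u + σ * t) ^ 2 < 0}
      ≤ gaussianReal 0 1 {t : ℝ | ENNReal.ofReal 10 ≤ ENNReal.ofReal ((y + σ * t) ^ 2)} :=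
        measure_mono hsub
    _ ≤ (∫⁻ t : ℝ, ENNReal.ofReal ((y + σ * t) ^ 2) ∂(gaussianReal 0 1)) / ENNReal.ofReal 10 :=
        meas_ge_le_lintegral_div hmeas (by simp) (by simp)
    _ = ENNReal.ofReal (y ^ 2 + σ ^ 2) / ENNReal.ofReal 10 := by rw [lintegral_shift_sq]
    _ = ENNReal.ofReal ((y ^ 2 + σ ^ 2) / 10) := by
        rw [ENNReal.ofReal_div_of_pos (by norm_num)]
    _ ≤ ENNReal.ofReal (1 - ((10 - x ^ 2) / 10) * (1 - σ ^ 2)) := by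
        apply ENNReal.ofReal_le_ofReal
        rw [hy] at htight ⊢
        nlinarith [htight]
end
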